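/- Fix an integer s ≥ 0 and let p = p(n) → ∞ with (ln p)/n → 0 as n → ∞. Then the normalizing constants a(p,n,s) = 1 − (p−s)^{−2/(n−s−2)} c(p,n,s) and b(p,n,s) = (2/(n−s−2)) (p−s)^{−2/(n−s−2)} c(p,n,s), where c(p,n,s) = {(1/2)(n−s−2) B(1/2,(n−s−2)/2) √(1 − (p−s)^{−2/(n−s−2)})}^{2/(n−s−2)}, both converge to 0 as n → ∞. -/

import Mathlib

open Filter

noncomputable section

/-- The Beta function `B(a,b)`. -/
def Bfun (a b : ℝ) : ℝ := Real.Gamma a * Real.Gamma b / Real.Gamma (a + b)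

/-- Correction factor `c(p,n,s)`. -/
def cconst (p n s : ℕ) : ℝ :=
  (((n : ℝ) - s - 2) / 2 * Bfun (1 / 2) (((n : ℝ) - s - 2) / 2) *
      Real.sqrt (1 - ((p : ℝ) - s) ^ (-(2 : ℝ) / ((n : ℝ) - s - 2)))) ^
    ((2 : ℝ) / ((n : ℝ) - s - 2))

/-- Centering constant `a(p,n,s)`. -/
def aconst (p n s : ℕ) : ℝ :=
  1 - ((p : ℝ) - s) ^ (-(2 : ℝ) / ((n : ℝ) - s - 2)) * cconst p n s

/-- Scaling constant `b(p,n,s)`. -/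
def bconst (p n s : ℕ) : ℝ :=
  2 / ((n : ℝ) - s - 2) * ((p : ℝ) - s) ^ (-(2 : ℝ) / ((n : ℝ) - s - 2)) * cconst p n s

/-- Auxiliary: `m = n - s - 2`. -/
def mfun (s n : ℕ) : ℝ := (n : ℝ) - s - 2

/-- Auxiliary: `q = p - s`. -/
def qfun (s pn : ℕ) : ℝ := (pn : ℝ) - s

/-- Auxiliary: the base of the rpow in `cconst`. -/
def Afun (s pn n : ℕ) : ℝ :=
  mfun s n / 2 * Bfun (1 / 2) (mfun s n / 2) *
    Real.sqrt (1 - qfun s pn ^ (-(2 : ℝ) / mfun s n))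

lemma cconst_eq (s pn n : ℕ) :
    cconst pn n s = Afun s pn n ^ ((2 : ℝ) / mfun s n) := rfl

/-- Elementary inequality: `u/3 ≤ 1 - exp(-u)` for `0 < u ≤ 1`. -/
lemma aux_one_sub_exp_neg {u : ℝ} (h0 : 0 < u) (h1 : u ≤ 1) :
    u / 3 ≤ 1 - Real.exp (-u) := by
  have h2 : u + 1 ≤ Real.exp u := Real.add_one_le_exp u
  have h3 : Real.exp (-u) * (u + 1) ≤ 1 := by
    have := mul_le_mul_of_nonneg_left h2 (Real.exp_nonneg (-u))
    rwa [← Real.exp_add, neg_add_cancel, Real.exp_zero] at this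
  have h4 : u * Real.exp (-u) ≤ 1 - Real.exp (-u) := by nlinarith
  have h5 : Real.exp (-1 : ℝ) ≤ Real.exp (-u) := Real.exp_le_exp.2 (by linarith)
  have h6 : (1 : ℝ) / 3 ≤ Real.exp (-1 : ℝ) := by
    have h7 : Real.exp (1 : ℝ) ≤ 3 := by nlinarith [Real.exp_one_lt_d9]
    have h8 := Real.exp_pos (1 : ℝ)
    rw [Real.exp_neg]
    have h9 : (Real.exp 1)⁻¹ * Real.exp 1 = 1 := inv_mul_cancel₀ (ne_of_gt h8)
    nlinarith [inv_pos.mpr h8]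
  nlinarith

/-- Bounds on `t * B(1/2, t)` for `t ≥ 2`. -/
lemma aux_Bfun_bounds {t : ℝ} (ht : 2 ≤ t) :
    1 ≤ t * Bfun (1 / 2) t ∧ t * Bfun (1 / 2) t ≤ 2 * t := by
  have ht0 : 0 < t := by linarith
  have hg : ∀ a b : ℝ, 2 ≤ a → a ≤ b → Real.Gamma a ≤ Real.Gamma b := by
    intro a b ha hab
    exact (Real.Gamma_strictMonoOn_Ici.monotoneOn) (by simpa using ha)
      (by simp only [Set.mem_Ici]; linarith) hab
  have hGt : 0 < Real.Gamma t := Real.Gamma_pos_of_pos ht0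
  have hGth : 0 < Real.Gamma (1 / 2 + t) := Real.Gamma_pos_of_pos (by linarith)
  have hGh : Real.Gamma (1 / 2) = Real.sqrt Real.pi := Real.Gamma_one_half_eq
  have h1 : (1 : ℝ) ≤ Real.sqrt Real.pi := by
    rw [show (1 : ℝ) = Real.sqrt 1 by simp]
    exact Real.sqrt_le_sqrt (by linarith [Real.pi_gt_three])
  have h2 : Real.sqrt Real.pi ≤ 2 := by
    nlinarith [Real.sq_sqrt Real.pi_pos.le, Real.sqrt_nonneg Real.pi, Real.pi_le_four]
  -- upper: Γ(t) ≤ Γ(1/2 + t)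
  have hup : Real.Gamma t ≤ Real.Gamma (1 / 2 + t) := hg t (1 / 2 + t) ht (by linarith)
  -- lower: Γ(1/2 + t) ≤ Γ(t + 1) = t Γ(t)
  have hlow : Real.Gamma (1 / 2 + t) ≤ t * Real.Gamma t := by
    have := hg (1 / 2 + t) (t + 1) (by linarith) (by linarith)
    rwa [Real.Gamma_add_one (ne_of_gt ht0)] at this
  constructor
  · rw [Bfun, hGh, ← mul_div_assoc, one_le_div hGth]
    nlinarith
  · rw [Bfun, hGh, ← mul_div_assoc, div_le_iff₀ hGth]
    nlinarith

/-- Main pointwise estimate. -/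
lemma main_est (s pn n : ℕ) (hm4 : 4 ≤ mfun s n) (hq2 : 2 ≤ qfun s pn)
    (hlqm : Real.log (qfun s pn) / mfun s n ≤ 1 / 2) :
    qfun s pn ^ (-(2 : ℝ) / mfun s n) * cconst pn n s =
      Real.exp (Real.log (qfun s pn) * (-(2 : ℝ) / mfun s n) +
        Real.log (Afun s pn n) * ((2 : ℝ) / mfun s n)) ∧
    -(2 * Real.log (mfun s n)) ≤ Real.log (Afun s pn n) ∧
      Real.log (Afun s pn n) ≤ 2 * Real.log (mfun s n) := by
  set m := mfun s n with hm
  set q := qfun s pn with hq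
  have hm0 : 0 < m := by linarith
  have hq0 : 0 < q := by linarith
  have hlq : Real.log 2 ≤ Real.log q := Real.log_le_log (by norm_num) hq2
  have hlog2 : (1 : ℝ) / 2 ≤ Real.log 2 := by linarith [Real.log_two_gt_d9]
  -- the exponent u
  set u : ℝ := 2 * Real.log q / m with hu
  have hu0 : 0 < u := by
    rw [hu]
    exact div_pos (by nlinarith) hm0
  have hu1 : u ≤ 1 := by rw [hu]; rw [div_le_one hm0]; nlinarith [(div_le_iff₀ hm0).1 hlqm]
  have hx : q ^ (-(2 : ℝ) / m) = Real.exp (-u) := by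
    rw [Real.rpow_def_of_pos hq0]
    congr 1
    rw [hu]; ring
  -- bounds on 1 - x
  have h1x_lb : 1 / (3 * m) ≤ 1 - q ^ (-(2 : ℝ) / m) := by
    rw [hx]
    have h1 := aux_one_sub_exp_neg hu0 hu1
    have h2 : 1 / m ≤ u := by
      rw [hu, div_le_div_iff₀ hm0 hm0]
      nlinarith
    calc 1 / (3 * m) = (1 / m) / 3 := by ring
    _ ≤ u / 3 := by linarith
    _ ≤ _ := h1
  have h1x_ub : 1 - q ^ (-(2 : ℝ) / m) ≤ 1 := by
    have : (0 : ℝ) < q ^ (-(2 : ℝ) / m) := by rw [hx]; exact Real.exp_pos _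
    linarith
  have h1x0 : (0 : ℝ) ≤ 1 - q ^ (-(2 : ℝ) / m) := le_trans (by positivity) h1x_lb
  -- sqrt bounds
  have hs_ub : Real.sqrt (1 - q ^ (-(2 : ℝ) / m)) ≤ 1 := Real.sqrt_le_one.mpr h1x_ub
  have hs_lb : 1 / (2 * m) ≤ Real.sqrt (1 - q ^ (-(2 : ℝ) / m)) := by
    have h1 : Real.sqrt (1 / (3 * m)) ≤ Real.sqrt (1 - q ^ (-(2 : ℝ) / m)) :=
      Real.sqrt_le_sqrt h1x_lb
    have h2 : 1 / (2 * m) ≤ Real.sqrt (1 / (3 * m)) := by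
      rw [Real.le_sqrt' (by positivity)]
      rw [div_pow, one_pow, div_le_div_iff₀ (by positivity) (by positivity)]
      nlinarith
    linarith
  -- Beta bounds
  obtain ⟨hB1, hB2⟩ := aux_Bfun_bounds (t := m / 2) (by linarith)
  have hA : Afun s pn n = (m / 2) * Bfun (1 / 2) (m / 2) *
      Real.sqrt (1 - q ^ (-(2 : ℝ) / m)) := rfl
  have hs0 : (0 : ℝ) < Real.sqrt (1 - q ^ (-(2 : ℝ) / m)) := lt_of_lt_of_le (by positivity) hs_lb
  have hA_lb : 1 / (2 * m) ≤ Afun s pn n := by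
    rw [hA]
    calc 1 / (2 * m) ≤ 1 * Real.sqrt (1 - q ^ (-(2 : ℝ) / m)) := by
          nlinarith
    _ ≤ (m / 2) * Bfun (1 / 2) (m / 2) * Real.sqrt (1 - q ^ (-(2 : ℝ) / m)) := by
          nlinarith
  have hA_ub : Afun s pn n ≤ m := by
    rw [hA]
    have h3 : (m / 2) * Bfun (1 / 2) (m / 2) ≤ m := by linarith
    nlinarith
  have hA0 : 0 < Afun s pn n := lt_of_lt_of_le (by positivity) hA_lb
  have hlm : 0 < Real.log m := Real.log_pos (by linarith)
  have hl2m : Real.log 2 ≤ Real.log m := Real.log_le_log (by norm_num) (by linarith)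
  refine ⟨?_, ?_, ?_⟩
  · rw [cconst_eq, ← hm, Real.rpow_def_of_pos hq0, Real.rpow_def_of_pos hA0,
      ← Real.exp_add]
  · have h1 : Real.log (1 / (2 * m)) ≤ Real.log (Afun s pn n) :=
      Real.log_le_log (by positivity) hA_lb
    have h2 : Real.log (1 / (2 * m)) = -(Real.log 2 + Real.log m) := by
      rw [one_div, Real.log_inv, Real.log_mul (by norm_num) (ne_of_gt hm0)]
    rw [h2] at h1
    linarith
  · have h1 : Real.log (Afun s pn n) ≤ Real.log m := Real.log_le_log hA0 hA_ub
    linarith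

/-- **Vanishing of the normalizing constants.**  Fix `s` and let `p = p(n) → ∞` with
`(ln p(n))/n → 0` as `n → ∞`.  Then both normalizing constants `a(p(n), n, s)` and
`b(p(n), n, s)` converge to `0` as `n → ∞`. -/
theorem normalizing_constants_vanish
    (s : ℕ) (p : ℕ → ℕ)
    (hp : Tendsto p atTop atTop)
    (hlogp : Tendsto (fun n => Real.log (p n) / n) atTop (nhds 0)) :
    Tendsto (fun n => aconst (p n) n s) atTop (nhds 0) ∧
      Tendsto (fun n => bconst (p n) n s) atTop (nhds 0) := by
  -- basic tendstos
  have hm : Tendsto (fun n => mfun s n) atTop atTop := by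
    have := tendsto_atTop_add_const_right atTop (-((s : ℝ) + 2)) tendsto_natCast_atTop_atTop
    refine this.congr fun n => ?_
    simp [mfun]; ring
  have hq : Tendsto (fun n => qfun s (p n)) atTop atTop := by
    have h1 : Tendsto (fun n => ((p n : ℝ))) atTop atTop :=
      tendsto_natCast_atTop_atTop.comp hp
    have := tendsto_atTop_add_const_right atTop (-(s : ℝ)) h1
    refine this.congr fun n => ?_
    simp [qfun]; ring
  -- n / m → 1
  have hnm : Tendsto (fun n : ℕ => (n : ℝ) / mfun s n) atTop (nhds 1) := by
    have h0 : Tendsto (fun n => ((s : ℝ) + 2) / mfun s n) atTop (nhds 0) :=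
      tendsto_const_nhds.div_atTop hm
    have h1 : Tendsto (fun n => 1 + ((s : ℝ) + 2) / mfun s n) atTop (nhds 1) := by
      simpa using tendsto_const_nhds.add h0
    refine h1.congr' ?_
    filter_upwards [hm.eventually_ge_atTop 1] with n hn
    have hm0 : mfun s n ≠ 0 := by linarith
    field_simp
    simp only [mfun]
    ring
  -- log q / n → 0
  have hlqn : Tendsto (fun n => Real.log (qfun s (p n)) / n) atTop (nhds 0) := by
    refine tendsto_of_tendsto_of_tendsto_of_le_of_le' tendsto_const_nhds hlogp ?_ ?_
    · filter_upwards [hq.eventually_ge_atTop 2] with n hn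
      have : (0 : ℝ) ≤ Real.log (qfun s (p n)) := Real.log_nonneg (by linarith)
      positivity
    · filter_upwards [hq.eventually_ge_atTop 2, eventually_ge_atTop 1] with n hn hn1
      have hq0 : (0 : ℝ) < qfun s (p n) := by linarith
      have hqp : qfun s (p n) ≤ (p n : ℝ) := by
        simp only [qfun]; nlinarith [Nat.cast_nonneg (α := ℝ) s]
      have hn0 : (0 : ℝ) < (n : ℝ) := by exact_mod_cast hn1
      have hll := Real.log_le_log hq0 hqp
      gcongr
  -- log q / m → 0
  have hlq : Tendsto (fun n => Real.log (qfun s (p n)) / mfun s n) atTop (nhds 0) := by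
    have h1 := hlqn.mul hnm
    rw [mul_one] at h1
    refine h1.congr' ?_
    filter_upwards [hm.eventually_ge_atTop 1, eventually_ge_atTop 1] with n hn hn1
    have hm0 : mfun s n ≠ 0 := by linarith
    have hn0 : (n : ℝ) ≠ 0 := by
      have : (0:ℝ) < (n : ℝ) := by exact_mod_cast hn1
      linarith
    field_simp
  -- log m / m → 0
  have hlogm : Tendsto (fun n => Real.log (mfun s n) / mfun s n) atTop (nhds 0) := by
    have := Real.isLittleO_log_id_atTop.tendsto_div_nhds_zero.comp hm
    simpa [Function.comp_def] using this
  -- 2 / m → 0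
  have h2m : Tendsto (fun n => 2 / mfun s n) atTop (nhds 0) :=
    tendsto_const_nhds.div_atTop hm
  -- the key tendsto
  have hg1 : Tendsto (fun n => Real.log (qfun s (p n)) * (-(2 : ℝ) / mfun s n))
      atTop (nhds 0) := by
    have := hlq.const_mul (-2 : ℝ)
    rw [mul_zero] at this
    refine this.congr fun n => by ring
  have hg2 : Tendsto (fun n => Real.log (Afun s (p n) n) * ((2 : ℝ) / mfun s n))
      atTop (nhds 0) := by
    have hub : Tendsto (fun n => 4 * (Real.log (mfun s n) / mfun s n)) atTop (nhds 0) := by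
      simpa using hlogm.const_mul 4
    have hlb : Tendsto (fun n => -(4 * (Real.log (mfun s n) / mfun s n))) atTop (nhds 0) := by
      simpa using hub.neg
    refine tendsto_of_tendsto_of_tendsto_of_le_of_le' hlb hub ?_ ?_
    · filter_upwards [hm.eventually_ge_atTop 4, hq.eventually_ge_atTop 2,
        hlq.eventually_le_const (show (0:ℝ) < 1/2 by norm_num)] with n h1 h2 h3
      obtain ⟨hA1, -⟩ := (main_est s (p n) n h1 h2 h3).2
      have hm0 : (0 : ℝ) < mfun s n := by linarith
      have : -(2 * Real.log (mfun s n)) * ((2 : ℝ) / mfun s n) ≤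
          Real.log (Afun s (p n) n) * ((2 : ℝ) / mfun s n) :=
        mul_le_mul_of_nonneg_right hA1 (by positivity)
      calc -(4 * (Real.log (mfun s n) / mfun s n))
          = -(2 * Real.log (mfun s n)) * ((2 : ℝ) / mfun s n) := by ring
      _ ≤ _ := this
    · filter_upwards [hm.eventually_ge_atTop 4, hq.eventually_ge_atTop 2,
        hlq.eventually_le_const (show (0:ℝ) < 1/2 by norm_num)] with n h1 h2 h3
      obtain ⟨-, hA2⟩ := (main_est s (p n) n h1 h2 h3).2
      have hm0 : (0 : ℝ) < mfun s n := by linarith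
      calc Real.log (Afun s (p n) n) * ((2 : ℝ) / mfun s n)
          ≤ 2 * Real.log (mfun s n) * ((2 : ℝ) / mfun s n) :=
            mul_le_mul_of_nonneg_right hA2 (by positivity)
      _ = 4 * (Real.log (mfun s n) / mfun s n) := by ring
  have hg : Tendsto (fun n => Real.log (qfun s (p n)) * (-(2 : ℝ) / mfun s n) +
      Real.log (Afun s (p n) n) * ((2 : ℝ) / mfun s n)) atTop (nhds 0) := by
    simpa using hg1.add hg2
  have key : Tendsto (fun n => qfun s (p n) ^ (-(2 : ℝ) / mfun s n) * cconst (p n) n s)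
      atTop (nhds 1) := by
    have hexp : Tendsto (fun n => Real.exp (Real.log (qfun s (p n)) * (-(2 : ℝ) / mfun s n) +
        Real.log (Afun s (p n) n) * ((2 : ℝ) / mfun s n))) atTop (nhds 1) := by
      have := (Real.continuous_exp.tendsto 0).comp hg
      simpa [Function.comp_def] using this
    have heq : (fun n => Real.exp (Real.log (qfun s (p n)) * (-(2 : ℝ) / mfun s n) +
        Real.log (Afun s (p n) n) * ((2 : ℝ) / mfun s n))) =ᶠ[atTop]
        (fun n => qfun s (p n) ^ (-(2 : ℝ) / mfun s n) * cconst (p n) n s) := by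
      filter_upwards [hm.eventually_ge_atTop 4, hq.eventually_ge_atTop 2,
        hlq.eventually_le_const (show (0:ℝ) < 1/2 by norm_num)] with n h1 h2 h3
      exact ((main_est s (p n) n h1 h2 h3).1).symm
    exact Tendsto.congr' heq hexp
  have hxceq : ∀ n, ((p n : ℝ) - s) ^ (-(2 : ℝ) / ((n : ℝ) - s - 2)) * cconst (p n) n s =
      qfun s (p n) ^ (-(2 : ℝ) / mfun s n) * cconst (p n) n s := fun n => rfl
  constructor
  · have h : Tendsto (fun n => 1 - qfun s (p n) ^ (-(2 : ℝ) / mfun s n) * cconst (p n) n s)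
        atTop (nhds 0) := by
      simpa using (tendsto_const_nhds (x := (1:ℝ))).sub key
    exact h.congr fun n => rfl
  · have h : Tendsto (fun n => 2 / mfun s n *
        (qfun s (p n) ^ (-(2 : ℝ) / mfun s n) * cconst (p n) n s)) atTop (nhds 0) := by
      simpa using h2m.mul key
    exact h.congr fun n => (mul_assoc _ _ _).symm

end
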